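/- arXiv:1009.2007 — 6 statements merged into one kernel-verified Lean document; each statement's English description precedes it below -/
import Mathlib

section
/- A subspace K of H is copyable along δ_e if and only if there exists a set S ⊆ ι such that K is the linear span of { e i | i ∈ S }. -/
open scoped TensorProduct InnerProductSpace

/-- The orthogonal projection of `H` onto the subspace `K`, regarded as an endomorphism
`P_K : H →ₗ[ℂ] H`. -/
noncomputable def projL {H : Type*} [NormedAddCommGroup H] [InnerProductSpace ℂ H]
    [FiniteDimensional ℂ H] (K : Submodule ℂ H) : H →ₗ[ℂ] H :=
  K.subtype ∘ₗ K.orthogonalProjectionOnto.toLinearMap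

/-- The classical structure `δ_e : H →ₗ[ℂ] H ⊗[ℂ] H` associated with an orthonormal basis
`e`, determined by `δ_e x = ∑ i, ⟪e i, x⟫_ℂ • (e i ⊗ₜ e i)`. -/
noncomputable def delta {ι H : Type*} [Fintype ι] [NormedAddCommGroup H]
    [InnerProductSpace ℂ H] (e : ι → H) : H →ₗ[ℂ] H ⊗[ℂ] H :=
  ∑ i, (innerSL ℂ (e i)).toLinearMap.smulRight (e i ⊗ₜ[ℂ] e i)

/-- A subspace `K` of `H` is copyable along `δ_e` if `δ_e ∘ₗ P_K = (P_K ⊗ P_K) ∘ₗ δ_e`. -/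
def Copyable {ι H : Type*} [Fintype ι] [NormedAddCommGroup H] [InnerProductSpace ℂ H]
    [FiniteDimensional ℂ H] (e : ι → H) (K : Submodule ℂ H) : Prop :=
  delta e ∘ₗ projL K = TensorProduct.map (projL K) (projL K) ∘ₗ delta e

section Aux

variable {ι H : Type*} [Fintype ι] [NormedAddCommGroup H] [InnerProductSpace ℂ H]
  [FiniteDimensional ℂ H]

lemma projL_mem (K : Submodule ℂ H) (x : H) : projL K x ∈ K :=
  (K.orthogonalProjectionOnto x).2

lemma projL_of_mem (K : Submodule ℂ H) {x : H} (hx : x ∈ K) : projL K x = x :=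
  Submodule.starProjection_eq_self_iff.2 hx

lemma projL_of_orth (K : Submodule ℂ H) {x : H} (hx : x ∈ Kᗮ) : projL K x = 0 := by
  show ((K.orthogonalProjectionOnto x : K) : H) = 0
  rw [Submodule.orthogonalProjectionOnto_apply_of_mem_orthogonal hx]
  rfl

lemma delta_apply (e : ι → H) (x : H) :
    delta e x = ∑ i, (⟪e i, x⟫_ℂ) • (e i ⊗ₜ[ℂ] e i) := by
  simp [delta]

lemma delta_basis [DecidableEq ι] (e : OrthonormalBasis ι ℂ H) (i : ι) :
    delta (⇑e) (e i) = e i ⊗ₜ[ℂ] e i := by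
  rw [delta_apply, Finset.sum_eq_single i]
  · rw [orthonormal_iff_ite.1 e.orthonormal]
    simp
  · intro j _ hj
    rw [orthonormal_iff_ite.1 e.orthonormal]
    simp [hj]
  · simp

/-- The functional `x ⊗ y ↦ ⟪u, x⟫ ⟪v, y⟫` on `H ⊗ H`. -/
noncomputable def inn2 (u v : H) : (H ⊗[ℂ] H) →ₗ[ℂ] ℂ :=
  (TensorProduct.lid ℂ ℂ).toLinearMap ∘ₗ
    TensorProduct.map (innerSL ℂ u).toLinearMap (innerSL ℂ v).toLinearMap

lemma inn2_tmul (u v x y : H) : inn2 u v (x ⊗ₜ[ℂ] y) = ⟪u, x⟫_ℂ * ⟪v, y⟫_ℂ := by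
  simp [inn2, TensorProduct.lid_tmul, smul_eq_mul]

end Aux

/-- A subspace `K` of `H` is copyable along `δ_e` if and only if it is the linear span of a
subset of the orthonormal basis `e`. -/
theorem copyable_iff_span_image
    {ι H : Type*} [Fintype ι] [NormedAddCommGroup H] [InnerProductSpace ℂ H]
    [FiniteDimensional ℂ H] (e : OrthonormalBasis ι ℂ H) (K : Submodule ℂ H) :
    Copyable (⇑e) K ↔ ∃ S : Set ι, K = Submodule.span ℂ (⇑e '' S) := by
  classical
  constructor
  · intro h
    -- For each `i`, the projection of `e i` is `0` or some basis vector.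
    have hP : ∀ i, projL K (e i) = 0 ∨ ∃ j, projL K (e i) = e j := by
      intro i
      have h1 : delta (⇑e) (projL K (e i)) = projL K (e i) ⊗ₜ[ℂ] projL K (e i) := by
        have h2 := LinearMap.congr_fun h (e i)
        simp only [LinearMap.comp_apply] at h2
        rw [delta_basis e i] at h2
        rw [h2, TensorProduct.map_tmul]
      set c : ι → ℂ := fun j => ⟪e j, projL K (e i)⟫_ℂ with hc
      have hcc : ∀ j k, c j * c k = if j = k then c j else 0 := by
        intro j k
        have h3 := congrArg (inn2 (e j) (e k)) h1
        rw [delta_apply, map_sum, inn2_tmul] at h3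
        have h4 : ∀ m, inn2 (e j) (e k) ((⟪e m, projL K (e i)⟫_ℂ) • (e m ⊗ₜ[ℂ] e m)) =
            (if j = m then 1 else 0) * (if k = m then 1 else 0) * c m := by
          intro m
          rw [map_smul, inn2_tmul, orthonormal_iff_ite.1 e.orthonormal,
            orthonormal_iff_ite.1 e.orthonormal, smul_eq_mul]
          simp only [hc]
          ring
        rw [Finset.sum_congr rfl fun m _ => h4 m] at h3
        rw [← h3]
        by_cases hjk : j = k
        · subst hjk
          rw [Finset.sum_eq_single j] <;> simp +contextual [eq_comm]
        · rw [Finset.sum_eq_zero, if_neg hjk]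
          intro m _
          by_cases hjm : j = m
          · subst hjm; simp [fun hh : j = k => hjk hh, Ne.symm, hjk]
          · simp [hjm]
      have hrep : projL K (e i) = ∑ k, c k • e k := (e.sum_repr' _).symm
      by_cases hz : ∀ j, c j = 0
      · left
        rw [hrep]
        simp [hz]
      · right
        push_neg at hz
        obtain ⟨j, hj⟩ := hz
        have hj1 : c j = 1 := by
          have := hcc j j
          rw [if_pos rfl] at this
          exact mul_left_cancel₀ hj (by rw [this, mul_one])
        refine ⟨j, ?_⟩
        rw [hrep, Finset.sum_eq_single j]
        · rw [hj1, one_smul]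
        · intro k _ hkj
          have := hcc j k
          rw [if_neg (Ne.symm hkj), hj1, one_mul] at this
          rw [this, zero_smul]
        · simp
    refine ⟨{j | e j ∈ K}, le_antisymm ?_ ?_⟩
    · intro x hx
      have hx' : x = ∑ i, (⟪e i, x⟫_ℂ) • projL K (e i) := by
        conv_lhs => rw [← projL_of_mem K hx, ← e.sum_repr' x]
        rw [map_sum]
        simp
      rw [hx']
      refine Submodule.sum_mem _ fun i _ => Submodule.smul_mem _ _ ?_
      rcases hP i with h0 | ⟨j, hj⟩
      · rw [h0]; exact Submodule.zero_mem _
      · rw [hj]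
        refine Submodule.subset_span ⟨j, ?_, rfl⟩
        show e j ∈ K
        rw [← hj]
        exact projL_mem K (e i)
    · rw [Submodule.span_le]
      rintro _ ⟨j, hj, rfl⟩
      exact hj
  · rintro ⟨S, rfl⟩
    set K := Submodule.span ℂ (⇑e '' S) with hK
    refine Module.Basis.ext e.toBasis fun i => ?_
    simp only [OrthonormalBasis.coe_toBasis, LinearMap.comp_apply]
    rw [delta_basis e i, TensorProduct.map_tmul]
    by_cases hi : i ∈ S
    · have hmem : e i ∈ K := Submodule.subset_span ⟨i, hi, rfl⟩
      rw [projL_of_mem K hmem, delta_basis e i]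
    · have horth : e i ∈ Kᗮ := by
        rw [Submodule.mem_orthogonal']
        intro u hu
        have : K ≤ LinearMap.ker (innerSL ℂ (e i)).toLinearMap := by
          rw [hK, Submodule.span_le]
          rintro _ ⟨j, hj, rfl⟩
          have hij : i ≠ j := fun hh => hi (hh ▸ hj)
          simp only [SetLike.mem_coe, LinearMap.mem_ker, ContinuousLinearMap.coe_coe,
            innerSL_apply_apply]
          rw [orthonormal_iff_ite.1 e.orthonormal, if_neg hij]
        exact this hu
      rw [projL_of_orth K horth, map_zero, TensorProduct.zero_tmul]
end

section
/- A subspace K of H is copyable along δ_e if and only if there exists a (necessarily unique) linear map δ_K : K →ₗ[ℂ] K ⊗[ℂ] K making both squares commute: (TensorProduct.map K.subtype K.subtype) ∘ₗ δ_K = δ_e ∘ₗ K.subtype, and δ_K ∘ₗ π_K = (TensorProduct.map π_K π_K) ∘ₗ δ_e, where K.subtype : K →ₗ[ℂ] H is the inclusion and π_K : H →ₗ[ℂ] K is the orthogonal projection of H onto K (with codomain K). -/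
open scoped TensorProduct InnerProductSpace

/-- A subspace `K` is copyable along `δ_e` iff there is a (necessarily unique) linear map
`δ_K : K →ₗ[ℂ] K ⊗[ℂ] K` with `(K.subtype ⊗ K.subtype) ∘ₗ δ_K = δ_e ∘ₗ K.subtype` and
`δ_K ∘ₗ π_K = (π_K ⊗ π_K) ∘ₗ δ_e`, where `π_K` is the orthogonal projection onto `K`. -/
theorem copyable_iff_exists_restriction
    {ι H : Type*} [Fintype ι] [NormedAddCommGroup H] [InnerProductSpace ℂ H]
    [FiniteDimensional ℂ H] (e : OrthonormalBasis ι ℂ H) (K : Submodule ℂ H) :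
    Copyable (⇑e) K ↔
      ∃! δK : K →ₗ[ℂ] K ⊗[ℂ] K,
        TensorProduct.map K.subtype K.subtype ∘ₗ δK = delta (⇑e) ∘ₗ K.subtype ∧
        δK ∘ₗ K.orthogonalProjectionOnto.toLinearMap =
          TensorProduct.map K.orthogonalProjectionOnto.toLinearMap
              K.orthogonalProjectionOnto.toLinearMap ∘ₗ delta (⇑e) := by
  set πK := K.orthogonalProjectionOnto.toLinearMap with hπdef
  set s := K.subtype with hsdef
  have hπs : πK ∘ₗ s = LinearMap.id := by
    ext x
    simp [hπdef, hsdef, Submodule.orthogonalProjectionOnto_mem_subspace_eq_self]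
  have hPs : projL K ∘ₗ s = s := by
    rw [projL, LinearMap.comp_assoc, ← hsdef, ← hπdef, hπs, LinearMap.comp_id]
  have hπP : πK ∘ₗ projL K = πK := by
    rw [projL, ← LinearMap.comp_assoc, ← hsdef, ← hπdef, hπs, LinearMap.id_comp]
  constructor
  · intro h
    refine ⟨TensorProduct.map πK πK ∘ₗ delta (⇑e) ∘ₗ s, ⟨?_, ?_⟩, ?_⟩
    · calc TensorProduct.map s s ∘ₗ (TensorProduct.map πK πK ∘ₗ delta (⇑e) ∘ₗ s)
          = TensorProduct.map (projL K) (projL K) ∘ₗ delta (⇑e) ∘ₗ s := by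
            rw [← LinearMap.comp_assoc, ← TensorProduct.map_comp]; rfl
        _ = (delta (⇑e) ∘ₗ projL K) ∘ₗ s := by rw [← LinearMap.comp_assoc, ← h]
        _ = delta (⇑e) ∘ₗ s := by rw [LinearMap.comp_assoc, hPs]
    · calc (TensorProduct.map πK πK ∘ₗ delta (⇑e) ∘ₗ s) ∘ₗ πK
          = TensorProduct.map πK πK ∘ₗ delta (⇑e) ∘ₗ projL K := by
            rw [LinearMap.comp_assoc, LinearMap.comp_assoc]; rfl
        _ = TensorProduct.map πK πK ∘ₗ
              TensorProduct.map (projL K) (projL K) ∘ₗ delta (⇑e) := by rw [h]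
        _ = TensorProduct.map πK πK ∘ₗ delta (⇑e) := by
            rw [← LinearMap.comp_assoc, ← TensorProduct.map_comp, hπP]
    · rintro δK' ⟨h1, h2⟩
      have key : δK' ∘ₗ πK ∘ₗ s = (TensorProduct.map πK πK ∘ₗ delta (⇑e)) ∘ₗ s := by
        rw [← LinearMap.comp_assoc, h2]
      rw [hπs, LinearMap.comp_id, LinearMap.comp_assoc] at key
      exact key
  · rintro ⟨δK, ⟨h1, h2⟩, -⟩
    have step : delta (⇑e) ∘ₗ projL K = (TensorProduct.map s s ∘ₗ δK) ∘ₗ πK := by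
      rw [h1, projL, LinearMap.comp_assoc]
    rw [Copyable, step, LinearMap.comp_assoc, h2, ← LinearMap.comp_assoc,
      ← TensorProduct.map_comp]
    rfl
end

section
/- If a subspace K of H is copyable along δ_e, then its orthogonal complement Kᗮ is also copyable along δ_e. Hence the copyable subspaces form an orthocomplemented sublattice of the lattice of subspaces of H. -/
open scoped TensorProduct InnerProductSpace

/-- If a subspace `K` of `H` is copyable along `δ_e`, then so is its orthogonal
complement `Kᗮ`. -/
theorem copyable_orthogonal
    {ι H : Type*} [Fintype ι] [NormedAddCommGroup H] [InnerProductSpace ℂ H]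
    [FiniteDimensional ℂ H] (e : OrthonormalBasis ι ℂ H) (K : Submodule ℂ H)
    (hK : Copyable (⇑e) K) : Copyable (⇑e) Kᗮ := by
  classical
  set P := projL K with hP
  have hdelta : ∀ x : H, delta (⇑e) x = ∑ i, (inner ℂ (e i) x : ℂ) • (e i ⊗ₜ[ℂ] e i) := by
    intro x; simp [delta, LinearMap.sum_apply]
  have hinner : ∀ i j, (inner ℂ (e i) (e j) : ℂ) = if i = j then 1 else 0 := by
    intro i j
    rcases eq_or_ne i j with rfl | h
    · simp [e.orthonormal.1 i, inner_self_eq_norm_sq_to_K]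
    · simp [h, e.orthonormal.2 h]
  have hde : ∀ j, delta (⇑e) (e j) = e j ⊗ₜ[ℂ] e j := by
    intro j
    rw [hdelta, Finset.sum_eq_single j]
    · simp [hinner]
    · intro i _ hij; simp [hinner, hij]
    · intro h; exact absurd (Finset.mem_univ j) h
  -- key claim
  have key : ∀ j, P (e j) = 0 ∨ P (e j) = e j := by
    intro j
    have hKj : delta (⇑e) (P (e j)) = P (e j) ⊗ₜ[ℂ] P (e j) := by
      have := LinearMap.congr_fun hK (e j)
      simpa [hde j] using this
    set f := (innerSL ℂ (e j)).toLinearMap with hf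
    set φ : H ⊗[ℂ] H →ₗ[ℂ] ℂ := TensorProduct.lift ((LinearMap.mul ℂ ℂ).compl₁₂ f f) with hφ
    have hφt : ∀ x y : H, φ (x ⊗ₜ[ℂ] y) = (inner ℂ (e j) x : ℂ) * inner ℂ (e j) y := by
      intro x y; simp [hφ, hf]
    set c : ℂ := inner ℂ (e j) (P (e j)) with hc
    have hcc : c = c * c := by
      have h1 : φ (delta (⇑e) (P (e j))) = c := by
        rw [hdelta, map_sum, Finset.sum_eq_single j]
        · simp [hφt, hinner]; rfl
        · intro i _ hij; simp [hφt, hinner, hij.symm]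
        · intro h; exact absurd (Finset.mem_univ j) h
      have h2 : φ (P (e j) ⊗ₜ[ℂ] P (e j)) = c * c := hφt _ _
      have h3 := congrArg φ hKj
      rw [h1, h2] at h3
      exact h3
    have hPmem : P (e j) ∈ K := (K.orthogonalProjectionOnto (e j)).2
    have hsub : e j - P (e j) ∈ Kᗮ := Submodule.sub_starProjection_mem_orthogonal (K := K) (e j)
    have horth : (inner ℂ (e j - P (e j)) (P (e j)) : ℂ) = 0 :=
      (Submodule.mem_orthogonal' K _).mp hsub _ hPmem
    have hcself : c = inner ℂ (P (e j)) (P (e j)) := by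
      have : (inner ℂ (e j) (P (e j)) : ℂ) - inner ℂ (P (e j)) (P (e j)) = 0 := by
        rw [← inner_sub_left]; exact horth
      linear_combination this
    have hfac : c * (c - 1) = 0 := by linear_combination -hcc
    rcases mul_eq_zero.mp hfac with h0 | h1'
    · left
      have : (inner ℂ (P (e j)) (P (e j)) : ℂ) = 0 := by rw [← hcself]; exact h0
      exact inner_self_eq_zero.mp this
    · right
      have h1 : c = 1 := by linear_combination h1'
      have hee : (inner ℂ (e j) (e j) : ℂ) = 1 := by simpa using hinner j j
      have hpe : (inner ℂ (P (e j)) (e j) : ℂ) = 1 := by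
        rw [← inner_conj_symm, ← hc, h1]; simp
      have hz : (inner ℂ (e j - P (e j)) (e j - P (e j)) : ℂ) = 0 := by
        rw [inner_sub_left, inner_sub_right, inner_sub_right, hee, hpe, ← hc, ← hcself, h1]
        ring
      have := inner_self_eq_zero.mp (sub_eq_zero.mp (inner_self_eq_zero.mp hz) ▸ hz)
      have := sub_eq_zero.mp (inner_self_eq_zero.mp hz)
      exact this.symm
  -- projection onto the orthogonal complement
  have hQ : ∀ x : H, projL (Kᗮ) x = x - P x := by
    intro x
    simp [projL, hP, Submodule.orthogonalProjectionOnto_orthogonal]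
  refine Module.Basis.ext e.toBasis ?_
  intro j
  have hbj : e.toBasis j = e j := e.coe_toBasis ▸ rfl
  rw [hbj]
  rcases key j with h0 | h1
  · simp [LinearMap.comp_apply, hQ, h0, hde j, TensorProduct.map_tmul]
  · simp [LinearMap.comp_apply, hQ, h1, hde j, TensorProduct.map_tmul]
end

section
/- Let H be a finite-dimensional complex inner product space and let L be a set of subspaces of H that contains ⊥ and ⊤ and is closed under meet ⊓, join ⊔ and orthogonal complement ᗮ. Then L is distributive (for all K, M, N ∈ L, K ⊓ (M ⊔ N) = (K ⊓ M) ⊔ (K ⊓ N)) if and only if for all K, M ∈ L with K ⊓ M = ⊥ the subspaces K and M are orthogonal (∀ x ∈ K, ∀ y ∈ M, ⟪x, y⟫_ℂ = 0). -/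
open scoped InnerProductSpace

set_option maxHeartbeats 1000000

/-- An orthocomplemented sublattice `L` of the lattice of subspaces of a finite-dimensional
complex inner product space is Boolean (distributive) if and only if any two of its members
with trivial intersection are orthogonal. -/
theorem boolean_iff_disjoint_orthogonal
    {H : Type*} [NormedAddCommGroup H] [InnerProductSpace ℂ H] [FiniteDimensional ℂ H]
    (L : Set (Submodule ℂ H))
    (hbot : ⊥ ∈ L) (htop : ⊤ ∈ L)
    (hinf : ∀ K ∈ L, ∀ M ∈ L, K ⊓ M ∈ L)
    (hsup : ∀ K ∈ L, ∀ M ∈ L, K ⊔ M ∈ L)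
    (hcompl : ∀ K ∈ L, Kᗮ ∈ L) :
    (∀ K ∈ L, ∀ M ∈ L, ∀ N ∈ L, K ⊓ (M ⊔ N) = (K ⊓ M) ⊔ (K ⊓ N)) ↔
      (∀ K ∈ L, ∀ M ∈ L, K ⊓ M = ⊥ → ∀ x ∈ K, ∀ y ∈ M, ⟪x, y⟫_ℂ = 0) := by
  constructor
  · intro hdist K hK M hM hKM x hx y hy
    -- M ≤ Kᗮ by distributivity
    have hMle : M ≤ Kᗮ := by
      have h := hdist M hM K hK Kᗮ (hcompl K hK)
      rw [Submodule.sup_orthogonal_of_hasOrthogonalProjection, inf_top_eq,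
        inf_comm M K, hKM, bot_sup_eq] at h
      rw [h]
      exact inf_le_right
    exact Submodule.mem_orthogonal K y |>.mp (hMle hy) x hx
  · intro horth K hK M hM N hN
    -- key commuting lemma
    have comm : ∀ A ∈ L, ∀ B ∈ L, A = (A ⊓ B) ⊔ (A ⊓ Bᗮ) := by
      intro A hA B hB
      set C := (A ⊓ B)ᗮ ⊓ A with hC
      have hCL : C ∈ L := hinf _ (hcompl _ (hinf A hA B hB)) A hA
      have hsplit : (A ⊓ B) ⊔ C = A :=
        Submodule.sup_orthogonal_inf_of_hasOrthogonalProjection inf_le_left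
      have hCB : C ⊓ B = ⊥ := by
        rw [eq_bot_iff]
        intro v hv
        have hvC : v ∈ (A ⊓ B)ᗮ := hv.1.1
        have hvAB : v ∈ A ⊓ B := ⟨hv.1.2, hv.2⟩
        have : ⟪v, v⟫_ℂ = 0 := by
          simpa using hvC v hvAB
        simpa using inner_self_eq_zero.mp this
      have hCorth : C ≤ Bᗮ := by
        intro v hv
        rw [Submodule.mem_orthogonal]
        intro b hb
        have := horth B hB C hCL (by rw [inf_comm]; exact hCB) b hb v hv
        exact this
      apply le_antisymm
      · conv_lhs => rw [← hsplit]
        exact sup_le_sup_left (le_inf (fun v hv => hv.2) hCorth) _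
      · exact sup_le inf_le_left inf_le_left
    -- projection lemma
    have proj : ∀ A ∈ L, ∀ a ∈ A, (K.orthogonalProjectionOnto a : H) ∈ K ⊓ A := by
      intro A hA a ha
      have hdecomp := comm A hA K hK
      rw [hdecomp, Submodule.mem_sup] at ha
      obtain ⟨u, hu, v, hv, rfl⟩ := ha
      have h1 : (K.orthogonalProjectionOnto u : H) = u :=
        Submodule.starProjection_eq_self_iff.mpr hu.2
      have h2 : K.orthogonalProjectionOnto v = 0 :=
        Submodule.orthogonalProjectionOnto_apply_of_mem_orthogonal hv.2
      have key : (K.orthogonalProjectionOnto (u + v) : H) = u := by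
        rw [map_add, h2, add_zero]; exact h1
      rw [key]
      exact ⟨hu.2, hu.1⟩
    apply le_antisymm
    · intro x hx
      obtain ⟨hxK, hxMN⟩ := hx
      have hrw : M ⊔ N = M ⊔ N ⊓ Mᗮ := by
        conv_lhs => rw [comm N hN M hM]
        rw [← sup_assoc, inf_comm N M, sup_inf_self]
      rw [hrw] at hxMN
      obtain ⟨m, hm, w, hw, hxmw⟩ :=
        Submodule.mem_sup.mp (show x ∈ M ⊔ N ⊓ Mᗮ from hxMN)
      have hPm := proj M hM m hm
      have hPw := proj (N ⊓ Mᗮ) (hinf N hN Mᗮ (hcompl M hM)) w hw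
      have hxeq : x = (K.orthogonalProjectionOnto m : H) + (K.orthogonalProjectionOnto w : H) := by
        have hx' : (K.orthogonalProjectionOnto x : H) = x := Submodule.starProjection_eq_self_iff.mpr hxK
        rw [← hxmw] at hx' ⊢
        rw [← hx', map_add, Submodule.coe_add]
      rw [hxeq]
      exact Submodule.add_mem _
        (Submodule.mem_sup_left hPm)
        (Submodule.mem_sup_right ⟨hPw.1, hPw.2.1⟩)
    · exact sup_le (inf_le_inf_left _ le_sup_left) (inf_le_inf_left _ le_sup_right)
end

section
/- Let H be a finite-dimensional complex inner product space and let L be a set of subspaces of H that contains ⊥ and ⊤ and is closed under meet ⊓, join ⊔ and orthogonal complement ᗮ. Then L is distributive (for all K, M, N ∈ L, K ⊓ (M ⊔ N) = (K ⊓ M) ⊔ (K ⊓ N)) if and only if there exists an orthonormal basis e : ι → H (ι a finite type) such that every K ∈ L is the span of a subset of { e i | i : ι }. -/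
open Submodule Module

private lemma span_image_inf_span_image {H : Type*} [NormedAddCommGroup H]
    [InnerProductSpace ℂ H] {n : ℕ} (e : OrthonormalBasis (Fin n) ℂ H) (S T : Set (Fin n)) :
    Submodule.span ℂ (⇑e '' S) ⊓ Submodule.span ℂ (⇑e '' T)
      = Submodule.span ℂ (⇑e '' (S ∩ T)) := by
  have hco : ⇑e.toBasis = ⇑e := e.coe_toBasis
  apply le_antisymm
  · intro x hx
    rw [Submodule.mem_inf] at hx
    obtain ⟨hxS, hxT⟩ := hx
    rw [← hco, Basis.mem_span_image] at hxS hxT ⊢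
    exact Set.subset_inter hxS hxT
  · exact le_inf (span_mono (Set.image_mono Set.inter_subset_left))
      (span_mono (Set.image_mono Set.inter_subset_right))

/-- An orthocomplemented sublattice `L` of the lattice of subspaces of a finite-dimensional
complex inner product space is Boolean (distributive) if and only if there exists an
orthonormal basis `e` of `H` such that every member of `L` is the span of a subset of the
basis vectors. -/
theorem boolean_iff_exists_orthonormalBasis
    {H : Type*} [NormedAddCommGroup H] [InnerProductSpace ℂ H] [FiniteDimensional ℂ H]
    (L : Set (Submodule ℂ H))
    (hbot : ⊥ ∈ L) (htop : ⊤ ∈ L)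
    (hinf : ∀ K ∈ L, ∀ M ∈ L, K ⊓ M ∈ L)
    (hsup : ∀ K ∈ L, ∀ M ∈ L, K ⊔ M ∈ L)
    (hcompl : ∀ K ∈ L, Kᗮ ∈ L) :
    (∀ K ∈ L, ∀ M ∈ L, ∀ N ∈ L, K ⊓ (M ⊔ N) = (K ⊓ M) ⊔ (K ⊓ N)) ↔
      ∃ (n : ℕ) (e : OrthonormalBasis (Fin n) ℂ H),
        ∀ K ∈ L, ∃ S : Set (Fin n), K = Submodule.span ℂ (⇑e '' S) := by
  constructor
  · intro hd
    -- the set of atoms of `L`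
    set T : Set (Submodule ℂ H) :=
      {A | A ∈ L ∧ A ≠ ⊥ ∧ ∀ B ∈ L, B ≤ A → B = ⊥ ∨ B = A} with hT
    -- every nonzero element of `L` contains an atom
    have hatom : ∀ K ∈ L, K ≠ ⊥ → ∃ A ∈ T, A ≤ K := by
      intro K hK hKne
      obtain ⟨A, ⟨hAL, hAK, hAne⟩, hmin⟩ :=
        (wellFounded_lt (α := Submodule ℂ H)).has_min
          {M | M ∈ L ∧ M ≤ K ∧ M ≠ ⊥} ⟨K, hK, le_rfl, hKne⟩
      refine ⟨A, ⟨hAL, hAne, fun B hB hBA => ?_⟩, hAK⟩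
      by_cases hB0 : B = ⊥
      · exact Or.inl hB0
      · refine Or.inr ?_
        by_contra hne
        exact hmin B ⟨hB, hBA.trans hAK, hB0⟩ (lt_of_le_of_ne hBA hne)
    -- distinct atoms are orthogonal
    have horth : ∀ A ∈ T, ∀ B ∈ T, A ≠ B → A ≤ Bᗮ := by
      intro A hA B hB hne
      have h1 : B ⊔ Bᗮ = ⊤ := Submodule.sup_orthogonal_of_hasOrthogonalProjection
      have h2 : A = (A ⊓ B) ⊔ (A ⊓ Bᗮ) := by
        rw [← hd A hA.1 B hB.1 Bᗮ (hcompl B hB.1), h1, inf_top_eq]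
      have h3 : A ⊓ B = ⊥ := by
        rcases hB.2.2 (A ⊓ B) (hinf A hA.1 B hB.1) inf_le_right with h | h
        · exact h
        · have hBA : B ≤ A := h ▸ inf_le_left
          rcases hA.2.2 B hB.1 hBA with h' | h'
          · exact absurd h' hB.2.1
          · exact absurd h'.symm hne
      rw [h3, bot_sup_eq] at h2
      exact h2.le.trans inf_le_right
    -- the set of atoms is finite
    have hfinT : T.Finite := by
      rw [← Set.finite_coe_iff]
      have hex : ∀ A : T, ∃ x : H, x ∈ (A : Submodule ℂ H) ∧ ‖x‖ = 1 := by
        rintro ⟨A, hA⟩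
        obtain ⟨x, hx, hx0⟩ := Submodule.exists_mem_ne_zero_of_ne_bot hA.2.1
        refine ⟨(‖x‖ : ℂ)⁻¹ • x, A.smul_mem _ hx, ?_⟩
        rw [norm_smul]
        simp [norm_ne_zero_iff.mpr hx0]
      choose v hv hv1 using hex
      have ho : Orthonormal ℂ v := by
        constructor
        · exact hv1
        · intro i j hij
          have hij' : (i : Submodule ℂ H) ≠ (j : Submodule ℂ H) := by
            simpa [Subtype.ext_iff] using hij
          have := horth _ i.2 _ j.2 hij' (hv i)
          rw [Submodule.mem_orthogonal] at this
          exact (inner_eq_zero_symm).mpr (this _ (hv j))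
      exact ho.linearIndependent.finite
    -- finite sups of elements of `L` are in `L`
    have hsSup : ∀ s : Set (Submodule ℂ H), s.Finite → s ⊆ L → sSup s ∈ L := by
      intro s hs
      refine Set.Finite.induction_on (motive := fun s _ => s ⊆ L → sSup s ∈ L) s hs ?_ ?_
      · intro _; simpa using hbot
      · intro a s' _ _ ih hsub
        rw [sSup_insert]
        exact hsup _ (hsub (Set.mem_insert _ _)) _ (ih fun x hx => hsub (Set.mem_insert_of_mem _ hx))
    -- every element of `L` is the sup of the atoms below it
    have hrep : ∀ K ∈ L, K = sSup {A | A ∈ T ∧ A ≤ K} := by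
      intro K hK
      set s : Set (Submodule ℂ H) := {A | A ∈ T ∧ A ≤ K} with hs
      have hsfin : s.Finite := hfinT.subset fun A hA => hA.1
      have hsL : sSup s ∈ L := hsSup s hsfin fun A hA => hA.1.1
      have hJK : sSup s ≤ K := sSup_le fun A hA => hA.2
      have hKJ : K ⊓ (sSup s)ᗮ = ⊥ := by
        by_contra hne
        obtain ⟨C, hC, hCle⟩ := hatom _ (hinf K hK _ (hcompl _ hsL)) hne
        have hCs : C ∈ s := ⟨hC, hCle.trans inf_le_left⟩
        have : C ≤ sSup s ⊓ (sSup s)ᗮ :=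
          le_inf (le_sSup hCs) (hCle.trans inf_le_right)
        rw [(Submodule.orthogonal_disjoint (sSup s)).eq_bot] at this
        exact hC.2.1 (le_bot_iff.mp this)
      calc K = K ⊓ (sSup s ⊔ (sSup s)ᗮ) := by
              rw [Submodule.sup_orthogonal_of_hasOrthogonalProjection, inf_top_eq]
        _ = (K ⊓ sSup s) ⊔ (K ⊓ (sSup s)ᗮ) := hd K hK _ hsL _ (hcompl _ hsL)
        _ = sSup s := by rw [hKJ, sup_bot_eq, inf_eq_right.mpr hJK]
    -- atoms not below `K ∈ L` are orthogonal to `K`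
    have hKorth : ∀ K ∈ L, ∀ A ∈ T, ¬ A ≤ K → A ≤ Kᗮ := by
      intro K hK A hA hnle
      have : K ≤ Aᗮ := by
        rw [hrep K hK]
        refine sSup_le fun B hB => ?_
        have hne : A ≠ B := fun h => hnle (h ▸ hB.2)
        exact (orthogonal_gc ℂ H).le_u (by
          exact_mod_cast horth A hA B hB.1 hne)
      intro x hx
      exact (Submodule.mem_orthogonal' _ _).mpr fun u hu =>
        (Submodule.mem_orthogonal _ _).mp (this hu) x hx
    -- the atoms form an orthogonal family with supremum `⊤`
    haveI : Fintype ↥T := hfinT.fintype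
    classical
    set V : ↥T → Submodule ℂ H := fun A => (A : Submodule ℂ H) with hV
    have hfam : OrthogonalFamily ℂ (fun A => V A) (fun A => (V A).subtypeₗᵢ) := by
      intro i j hij v w
      have hij' : (i : Submodule ℂ H) ≠ (j : Submodule ℂ H) := by
        simpa [Subtype.ext_iff] using hij
      have := horth _ i.2 _ j.2 hij' v.2
      rw [Submodule.mem_orthogonal] at this
      exact inner_eq_zero_symm.mpr (this _ w.2)
    have hsupT : iSup V = ⊤ := by
      have h1 : (⊤ : Submodule ℂ H) = sSup {A | A ∈ T ∧ A ≤ ⊤} := hrep ⊤ htop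
      have h2 : {A | A ∈ T ∧ A ≤ ⊤} = T := by ext A; simp
      rw [h2] at h1
      rw [← h1.symm, sSup_eq_iSup']
    have hint : DirectSum.IsInternal V := by
      rw [hfam.isInternal_iff, hsupT, Submodule.top_orthogonal_eq_bot]
    refine ⟨finrank ℂ H, hint.subordinateOrthonormalBasis rfl hfam, ?_⟩
    set e := hint.subordinateOrthonormalBasis rfl hfam with he
    set idx := fun i => hint.subordinateOrthonormalBasisIndex rfl i hfam with hidx
    have hmem : ∀ i, e i ∈ V (idx i) :=
      fun i => hint.subordinateOrthonormalBasis_subordinate rfl i hfam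
    intro K hK
    refine ⟨{i | V (idx i) ≤ K}, ?_⟩
    set S : Set (Fin (finrank ℂ H)) := {i | V (idx i) ≤ K} with hS
    have le1 : Submodule.span ℂ (⇑e '' S) ≤ K := by
      rw [Submodule.span_le]
      rintro _ ⟨i, hi, rfl⟩
      exact hi (hmem i)
    have le2 : Submodule.span ℂ (⇑e '' Sᶜ) ≤ Kᗮ := by
      rw [Submodule.span_le]
      rintro _ ⟨i, hi, rfl⟩
      exact hKorth K hK _ (idx i).2 hi (hmem i)
    have le3 : Submodule.span ℂ (⇑e '' S) ⊔ Submodule.span ℂ (⇑e '' Sᶜ) = ⊤ := by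
      rw [← Submodule.span_union, ← Set.image_union, Set.union_compl_self,
        Set.image_univ, ← e.coe_toBasis]
      exact e.toBasis.span_eq
    refine le_antisymm (fun x hx => ?_) le1
    have hx' : x ∈ Submodule.span ℂ (⇑e '' S) ⊔ Submodule.span ℂ (⇑e '' Sᶜ) := by
      rw [le3]; trivial
    obtain ⟨p, hp, q, hq, rfl⟩ := Submodule.mem_sup.mp hx'
    have hqK : q ∈ K := by
      rw [(add_sub_cancel_left p q).symm]
      exact K.sub_mem hx (le1 hp)
    have hq0 : q = 0 := by
      have := (Submodule.mem_orthogonal _ _).mp (le2 hq) q hqK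
      exact inner_self_eq_zero.mp this
    rw [hq0, add_zero]
    exact hp
  · rintro ⟨n, e, hrep⟩ K hK M hM N hN
    obtain ⟨S, rfl⟩ := hrep K hK
    obtain ⟨U1, rfl⟩ := hrep M hM
    obtain ⟨U2, rfl⟩ := hrep N hN
    rw [← Submodule.span_union, ← Set.image_union, span_image_inf_span_image,
      span_image_inf_span_image, span_image_inf_span_image,
      Set.inter_union_distrib_left, Set.image_union, Submodule.span_union]
end

section
/- Let H be a finite-dimensional complex inner product space and let C be a unital star-subalgebra of the algebra H →L[ℂ] H of continuous linear endomorphisms of H (with star given by the adjoint). Then C is commutative (∀ a b ∈ C, a * b = b * a) if and only if there exists an orthonormal basis e : ι → H (ι a finite type) such that every T ∈ C is diagonal with respect to e, i.e. for every T ∈ C and every i : ι there exists c : ℂ with T (e i) = c • e i. -/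
set_option maxHeartbeats 1000000

open Module Module.End

/-- A unital star-subalgebra `C` of the algebra of continuous linear endomorphisms of a
finite-dimensional complex inner product space `H` (with star the adjoint) is commutative
if and only if there exists an orthonormal basis of `H` simultaneously diagonalizing all
members of `C`. -/
theorem commutative_starSubalgebra_iff_simultaneously_diagonal
    {H : Type*} [NormedAddCommGroup H] [InnerProductSpace ℂ H] [FiniteDimensional ℂ H]
    (C : StarSubalgebra ℂ (H →L[ℂ] H)) :
    (∀ a ∈ C, ∀ b ∈ C, a * b = b * a) ↔
      ∃ (n : ℕ) (e : OrthonormalBasis (Fin n) ℂ H),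
        ∀ T ∈ C, ∀ i : Fin n, ∃ c : ℂ, T (e i) = c • e i := by
  classical
  constructor
  · intro h
    set S : C × Bool → (H →L[ℂ] H) := fun p =>
      if p.2 then (2⁻¹ : ℂ) • ((p.1 : H →L[ℂ] H) + star (p.1 : H →L[ℂ] H))
      else (Complex.I / 2) • (star (p.1 : H →L[ℂ] H) - (p.1 : H →L[ℂ] H)) with hS
    have hmem : ∀ p, S p ∈ C := by
      rintro ⟨⟨a, ha⟩, b⟩
      cases b <;> simp only [hS, if_true, if_false, Bool.false_eq_true]
      · exact C.smul_mem (sub_mem (star_mem ha) ha) _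
      · exact C.smul_mem (add_mem ha (star_mem ha)) _
    have hsa : ∀ p, IsSelfAdjoint (S p) := by
      rintro ⟨⟨a, ha⟩, b⟩
      cases b <;> simp only [hS, if_true, if_false, Bool.false_eq_true] <;>
        · unfold IsSelfAdjoint
          simp [star_smul, star_add, star_sub, star_star, Complex.star_def, map_div₀,
            Complex.conj_I]
          module
    have hT : ∀ p, ((S p : H →ₗ[ℂ] H)).IsSymmetric := fun p =>
      ContinuousLinearMap.isSelfAdjoint_iff_isSymmetric.mp (hsa p)
    set T : C × Bool → Module.End ℂ H := fun p => (S p : H →ₗ[ℂ] H) with hTdef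
    have hC : Pairwise (Function.onFun Commute T) := by
      intro p q _
      have hc : S p * S q = S q * S p := h _ (hmem p) _ (hmem q)
      show T p * T q = T q * T p
      ext x
      have := DFunLike.congr_fun hc x
      simpa [hTdef, Module.End.mul_apply, ContinuousLinearMap.mul_apply] using this
    have htop := LinearMap.IsSymmetric.iSup_iInf_eq_top_of_commute hT hC
    set V : ((C × Bool) → ℂ) → Submodule ℂ H := fun χ => ⨅ p, eigenspace (T p) (χ p) with hV
    have hOF : OrthogonalFamily ℂ (fun χ => V χ) (fun χ => (V χ).subtypeₗᵢ) :=
      LinearMap.IsSymmetric.orthogonalFamily_iInf_eigenspaces hT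
    have hfin : {χ | V χ ≠ ⊥}.Finite :=
      WellFoundedGT.finite_ne_bot_of_iSupIndep hOF.independent
    haveI : Fintype {χ // V χ ≠ ⊥} := hfin.fintype
    have hOF' : OrthogonalFamily ℂ (fun p : {χ // V χ ≠ ⊥} => V p.1)
        (fun p => (V p.1).subtypeₗᵢ) := fun i j hij => hOF (Subtype.coe_ne_coe.mpr hij)
    have hle : (⨆ χ, V χ) ≤ ⨆ p : {χ // V χ ≠ ⊥}, V p.1 := by
      refine iSup_le fun χ => ?_
      by_cases hχ : V χ = ⊥
      · rw [hχ]; exact bot_le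
      · exact le_iSup (fun p : {χ // V χ ≠ ⊥} => V p.1) ⟨χ, hχ⟩
    have hsup : ⨆ p : {χ // V χ ≠ ⊥}, V p.1 = ⊤ :=
      top_unique (htop ▸ hle)
    haveI : DecidableEq {χ // V χ ≠ ⊥} := Classical.decEq _
    have hint : DirectSum.IsInternal (fun p : {χ // V χ ≠ ⊥} => V p.1) :=
      hOF'.isInternal_iff.mpr (by rw [hsup, Submodule.top_orthogonal_eq_bot])
    refine ⟨finrank ℂ H, hint.subordinateOrthonormalBasis rfl hOF', ?_⟩
    intro A hA i
    set e := hint.subordinateOrthonormalBasis rfl hOF' with he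
    have hmem' := hint.subordinateOrthonormalBasis_subordinate rfl i hOF'
    set χ := (hint.subordinateOrthonormalBasisIndex rfl i hOF').1 with hχ
    have heig : ∀ p, S p (e i) = χ p • e i := by
      intro p
      have := (Submodule.mem_iInf _).mp hmem' p
      exact mem_eigenspace_iff.mp this
    have key : S (⟨A, hA⟩, true) + Complex.I • S (⟨A, hA⟩, false) = A := by
      have h2 : Complex.I * (Complex.I / 2) = -(2⁻¹ : ℂ) := by
        rw [mul_div_assoc', Complex.I_mul_I]; norm_num
      simp only [hS, if_true, if_false, Bool.false_eq_true]
      rw [smul_smul, h2]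
      module
    refine ⟨χ (⟨A, hA⟩, true) + Complex.I * χ (⟨A, hA⟩, false), ?_⟩
    have := DFunLike.congr_fun key (e i)
    rw [ContinuousLinearMap.add_apply, ContinuousLinearMap.smul_apply, heig, heig] at this
    rw [← this, smul_smul, add_smul]
  · rintro ⟨n, e, he⟩ a ha b hb
    apply ContinuousLinearMap.coe_injective
    apply e.toBasis.ext
    intro i
    obtain ⟨c, hc⟩ := he b hb i
    obtain ⟨d, hd⟩ := he a ha i
    simp only [OrthonormalBasis.coe_toBasis, ContinuousLinearMap.coe_mul,
      Module.End.mul_apply, ContinuousLinearMap.coe_coe, Function.comp_apply, hc, hd, map_smul,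
      smul_smul, mul_comm]
end
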